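/- If the sequence c : ℝ → (ℕ → ℝ) satisfies the linear system dc_j/dt = c_{j+1} for all j, then for m ∈ {0,1} the Hankel determinants satisfy d(H^m_n)/dt = G^m_n, where G^m_n is H^m_n with the last row shifted forward by one index. -/

import Mathlib

/-- Time-dependent Hankel determinant `H^m_n(t) = det(c_{i+j+m}(t))`. -/
noncomputable def Hf (c : ℕ → ℝ → ℝ) (m n : ℕ) (t : ℝ) : ℝ :=
  (Matrix.of fun i j : Fin n => c (i.val + j.val + m) t).det

/-- `G^m_n(t)`: the Hankel determinant `H^m_n(t)` with its last row shifted
forward by one index; by convention `G^m_0 = 0`. -/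
noncomputable def Gf (c : ℕ → ℝ → ℝ) (m n : ℕ) (t : ℝ) : ℝ :=
  if n = 0 then 0 else
  (Matrix.of fun i j : Fin n =>
    if i.val = n - 1 then c (m + n + j.val) t else c (i.val + j.val + m) t).det

/-- If `c_j' = c_{j+1}` for all `j`, then `(H^m_n)' = G^m_n` for `m ∈ {0,1}`, `n ≥ 1`. -/
theorem deriv_hankel_linear (c : ℕ → ℝ → ℝ)
    (hc : ∀ j t, HasDerivAt (c j) (c (j + 1) t) t)
    (m : ℕ) (hm : m = 0 ∨ m = 1) (n : ℕ) (hn : 1 ≤ n) (t : ℝ) :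
    HasDerivAt (fun s => Hf c m n s) (Gf c m n t) t := by
  clear hm
  set Mt : Matrix (Fin n) (Fin n) ℝ :=
    Matrix.of fun i j : Fin n => c (i.val + j.val + m) t with hMt
  set D : ℝ := ∑ σ : Equiv.Perm (Fin n), ((Equiv.Perm.sign σ : ℤ) : ℝ) *
      ∑ i : Fin n, (∏ j ∈ Finset.univ.erase i, c (σ j + j.val + m) t) •
        c (σ i + i.val + m + 1) t with hDdef
  have hk : n - 1 < n := by omega
  set k : Fin n := ⟨n - 1, hk⟩ with hkdef
  -- Step 1: the derivative via the Leibniz formula.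
  have step1 : HasDerivAt (fun s => Hf c m n s) D t := by
    have : (fun s => Hf c m n s) = fun s =>
        ∑ σ : Equiv.Perm (Fin n), ((Equiv.Perm.sign σ : ℤ) : ℝ) *
          ∏ i : Fin n, c (σ i + i.val + m) s := by
      funext s
      simp [Hf, Matrix.det_apply']
    rw [this, hDdef]
    apply HasDerivAt.fun_sum
    intro σ _
    exact (HasDerivAt.fun_finsetProd (fun i _ => hc (σ i + i.val + m) t)).const_mul _
  -- Step 2: rewrite `D` as a sum of determinants with one column updated.
  have step2 : D = ∑ i : Fin n,
      (Matrix.updateCol Mt i (fun a : Fin n => c (a.val + i.val + m + 1) t)).det := by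
    rw [hDdef]
    simp_rw [Finset.mul_sum]
    rw [Finset.sum_comm]
    refine Finset.sum_congr rfl fun i _ => ?_
    rw [Matrix.det_apply']
    refine Finset.sum_congr rfl fun σ _ => ?_
    rw [← Finset.mul_prod_erase Finset.univ _ (Finset.mem_univ i)]
    have h1 : Matrix.updateCol Mt i (fun a : Fin n => c (a.val + i.val + m + 1) t) (σ i) i
        = c (σ i + i.val + m + 1) t := by
      simp [Matrix.updateCol_apply]
    have h2 : ∏ j ∈ Finset.univ.erase i,
        Matrix.updateCol Mt i (fun a : Fin n => c (a.val + i.val + m + 1) t) (σ j) j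
        = ∏ j ∈ Finset.univ.erase i, c (σ j + j.val + m) t := by
      refine Finset.prod_congr rfl fun j hj => ?_
      have hji : j ≠ i := (Finset.mem_erase.mp hj).1
      simp [Matrix.updateCol_apply, hji, hMt]
    rw [h1, h2, smul_eq_mul]
    ring
  -- Step 3: all terms with `i ≠ k` vanish (two equal columns).
  have step3 : ∑ i : Fin n,
      (Matrix.updateCol Mt i (fun a : Fin n => c (a.val + i.val + m + 1) t)).det
      = (Matrix.updateCol Mt k (fun a : Fin n => c (a.val + k.val + m + 1) t)).det := by
    refine Finset.sum_eq_single k (fun i _ hik => ?_) (by simp)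
    have hi1 : i.val + 1 < n := by
      have : i.val ≠ n - 1 := fun h => hik (Fin.ext h)
      omega
    refine Matrix.det_zero_of_column_eq (M := Matrix.updateCol Mt i
      (fun a : Fin n => c (a.val + i.val + m + 1) t)) (i := i) (j := ⟨i.val + 1, hi1⟩)
      (fun h => by simp [Fin.ext_iff] at h) fun a => ?_
    have hne : (⟨i.val + 1, hi1⟩ : Fin n) ≠ i := by simp [Fin.ext_iff]
    rw [Matrix.updateCol_self, Matrix.updateCol_ne hne]
    show c (a.val + i.val + m + 1) t = Mt a ⟨i.val + 1, hi1⟩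
    simp only [hMt, Matrix.of_apply]
    congr 1
    omega
  -- Step 4: the remaining term is `Gf`.
  have step4 : (Matrix.updateCol Mt k (fun a : Fin n => c (a.val + k.val + m + 1) t)).det
      = Gf c m n t := by
    have hn0 : n ≠ 0 := by omega
    rw [Gf, if_neg hn0, ← Matrix.det_transpose]
    congr 1
    ext a b
    have hkv : (k : Fin n).val = n - 1 := rfl
    simp only [Matrix.transpose_apply, Matrix.of_apply]
    by_cases ha : a = k
    · subst ha
      rw [Matrix.updateCol_self, if_pos hkv]
      congr 1
      omega
    · rw [Matrix.updateCol_ne ha]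
      have ha' : ¬ a.val = n - 1 := fun h => ha (Fin.ext (h.trans hkv.symm))
      rw [if_neg ha']
      show c (↑b + ↑a + m) t = c (↑a + ↑b + m) t
      congr 1
      omega
  rw [← step4, ← step3, ← step2]
  exact step1
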